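/- Every formal power series f(t) over the integers with constant term 1 admits a unique factorization f(t) = ∏_{m≥1} (1 - t^m)^{s(m)} as a (possibly infinite) product over positive integers m, with uniquely determined integer exponents s(m). -/

import Mathlib

/-- The unit `1 - tᵐ` of `ℤ[[t]]` (for `m ≥ 1`); for `m = 0` we set it to `1`. -/
noncomputable def binomUnit (m : ℕ) : (PowerSeries ℤ)ˣ := by
  classical
  exact if h : IsUnit ((1 : PowerSeries ℤ) - PowerSeries.X ^ m) then h.unit else 1

open PowerSeries Finset

lemma isUnit_one_sub_X_pow {m : ℕ} (hm : 1 ≤ m) :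
    IsUnit ((1 : PowerSeries ℤ) - PowerSeries.X ^ m) := by
  rw [PowerSeries.isUnit_iff_constantCoeff, map_sub, map_one, map_pow,
    PowerSeries.constantCoeff_X, zero_pow (by omega), sub_zero]
  exact isUnit_one

lemma binomUnit_coe {m : ℕ} (hm : 1 ≤ m) :
    (binomUnit m : PowerSeries ℤ) = 1 - PowerSeries.X ^ m := by
  rw [binomUnit, dif_pos (isUnit_one_sub_X_pow hm)]
  exact (isUnit_one_sub_X_pow hm).unit_spec

lemma coeff_mul_one_sub_X_pow (A : PowerSeries ℤ) (m k : ℕ) :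
    PowerSeries.coeff k (A * (1 - PowerSeries.X ^ m)) =
      PowerSeries.coeff k A - if m ≤ k then PowerSeries.coeff (k - m) A else 0 := by
  rw [mul_sub, mul_one, map_sub, PowerSeries.coeff_mul_X_pow']

lemma zpow_coeffs {m : ℕ} (hm : 1 ≤ m) (s : ℤ) :
    PowerSeries.coeff 0 ((binomUnit m ^ s : (PowerSeries ℤ)ˣ) : PowerSeries ℤ) = 1 ∧
    (∀ j, 0 < j → j < m →
      PowerSeries.coeff j ((binomUnit m ^ s : (PowerSeries ℤ)ˣ) : PowerSeries ℤ) = 0) ∧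
    PowerSeries.coeff m ((binomUnit m ^ s : (PowerSeries ℤ)ˣ) : PowerSeries ℤ) = -s := by
  induction s using Int.induction_on with
  | zero =>
    refine ⟨by simp, fun j hj _ => by simp [PowerSeries.coeff_one, hj.ne'], ?_⟩
    have : m ≠ 0 := by omega
    simp [PowerSeries.coeff_one, this]
  | succ k ih =>
    obtain ⟨h0, hmid, hm'⟩ := ih
    have key : ((binomUnit m ^ ((k : ℤ) + 1) : (PowerSeries ℤ)ˣ) : PowerSeries ℤ) =
        ((binomUnit m ^ (k : ℤ) : (PowerSeries ℤ)ˣ) : PowerSeries ℤ) *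
          (1 - PowerSeries.X ^ m) := by
      rw [zpow_add_one, Units.val_mul, binomUnit_coe hm]
    refine ⟨?_, fun j hj hjm => ?_, ?_⟩
    · rw [key, coeff_mul_one_sub_X_pow, if_neg (by omega), h0, sub_zero]
    · rw [key, coeff_mul_one_sub_X_pow, if_neg (by omega), hmid j hj hjm, sub_zero]
    · rw [key, coeff_mul_one_sub_X_pow, if_pos le_rfl, Nat.sub_self, hm', h0]
      ring
  | pred k ih =>
    obtain ⟨h0, hmid, hm'⟩ := ih
    have key : ((binomUnit m ^ (-(k : ℤ) - 1) : (PowerSeries ℤ)ˣ) : PowerSeries ℤ) *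
        (1 - PowerSeries.X ^ m) =
        ((binomUnit m ^ (-(k : ℤ)) : (PowerSeries ℤ)ˣ) : PowerSeries ℤ) := by
      rw [← binomUnit_coe hm, ← Units.val_mul, ← zpow_add_one]
      norm_num
    have h0' : PowerSeries.coeff 0
        ((binomUnit m ^ (-(k : ℤ) - 1) : (PowerSeries ℤ)ˣ) : PowerSeries ℤ) = 1 := by
      have := congrArg (PowerSeries.coeff 0) key
      rwa [coeff_mul_one_sub_X_pow, if_neg (by omega), sub_zero, h0] at this
    refine ⟨h0', fun j hj hjm => ?_, ?_⟩
    · have := congrArg (PowerSeries.coeff j) key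
      rwa [coeff_mul_one_sub_X_pow, if_neg (by omega), sub_zero, hmid j hj hjm] at this
    · have := congrArg (PowerSeries.coeff m) key
      rw [coeff_mul_one_sub_X_pow, if_pos le_rfl, Nat.sub_self, h0', hm'] at this
      linarith

/-- partial product -/
noncomputable def partialProd (s : ℕ → ℤ) (n : ℕ) : (PowerSeries ℤ)ˣ :=
  ∏ m ∈ Finset.Icc 1 n, binomUnit m ^ s m

lemma partialProd_coe (s : ℕ → ℤ) (n : ℕ) :
    ((partialProd s n : (PowerSeries ℤ)ˣ) : PowerSeries ℤ) =
      ∏ m ∈ Finset.Icc 1 n, ((binomUnit m ^ s m : (PowerSeries ℤ)ˣ) : PowerSeries ℤ) :=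
  map_prod (Units.coeHom _) _ _

lemma coeff_zero_partialProd (s : ℕ → ℤ) (n : ℕ) :
    PowerSeries.coeff 0 ((partialProd s n : (PowerSeries ℤ)ˣ) : PowerSeries ℤ) = 1 := by
  rw [partialProd_coe, PowerSeries.coeff_zero_eq_constantCoeff, map_prod]
  refine Finset.prod_eq_one fun m hm => ?_
  have hm1 : 1 ≤ m := (Finset.mem_Icc.mp hm).1
  rw [← PowerSeries.coeff_zero_eq_constantCoeff_apply]
  exact (zpow_coeffs hm1 (s m)).1

lemma coeff_succ_partialProd (s : ℕ → ℤ) (n : ℕ) :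
    PowerSeries.coeff (n + 1) ((partialProd s (n + 1) : (PowerSeries ℤ)ˣ) : PowerSeries ℤ) =
      PowerSeries.coeff (n + 1) ((partialProd s n : (PowerSeries ℤ)ˣ) : PowerSeries ℤ)
        - s (n + 1) := by
  have hsplit : partialProd s (n + 1) = partialProd s n * binomUnit (n + 1) ^ s (n + 1) := by
    rw [partialProd, partialProd, Finset.prod_Icc_succ_top (by omega)]
  obtain ⟨hB0, hBmid, hBtop⟩ := zpow_coeffs (by omega : 1 ≤ n + 1) (s (n + 1))
  rw [hsplit, Units.val_mul, PowerSeries.coeff_mul,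
    Finset.Nat.sum_antidiagonal_eq_sum_range_succ_mk, Finset.sum_range_succ]
  have hmain : ∑ i ∈ Finset.range (n + 1),
      PowerSeries.coeff i ((partialProd s n : (PowerSeries ℤ)ˣ) : PowerSeries ℤ) *
        PowerSeries.coeff (n + 1 - i)
          ((binomUnit (n + 1) ^ s (n + 1) : (PowerSeries ℤ)ˣ) : PowerSeries ℤ) =
      -s (n + 1) := by
    rw [Finset.sum_eq_single_of_mem 0 (Finset.mem_range.mpr (by omega))]
    · rw [coeff_zero_partialProd, Nat.sub_zero, hBtop, one_mul]
    · intro i hi hi0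
      have hi' := Finset.mem_range.mp hi
      rw [hBmid (n + 1 - i) (by omega) (by omega), mul_zero]
  rw [hmain, Nat.sub_self, hB0, mul_one]
  ring

/-- recursively defined exponents -/
noncomputable def sAux (f : PowerSeries ℤ) : ℕ → ℤ
  | 0 => 0
  | n + 1 =>
    PowerSeries.coeff (n + 1)
        ((∏ m ∈ (Finset.Icc 1 n).attach, binomUnit m.1 ^ sAux f m.1 :
          (PowerSeries ℤ)ˣ) : PowerSeries ℤ)
      - PowerSeries.coeff (n + 1) f
  decreasing_by exact Nat.lt_succ_of_le (Finset.mem_Icc.mp m.2).2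

lemma sAux_zero (f : PowerSeries ℤ) : sAux f 0 = 0 := by rw [sAux]

lemma sAux_succ (f : PowerSeries ℤ) (n : ℕ) :
    sAux f (n + 1) =
      PowerSeries.coeff (n + 1) ((partialProd (sAux f) n : (PowerSeries ℤ)ˣ) : PowerSeries ℤ)
        - PowerSeries.coeff (n + 1) f := by
  rw [sAux, partialProd, ← Finset.prod_attach (Finset.Icc 1 n) (fun m => binomUnit m ^ sAux f m)]

/-- Every `f ∈ ℤ[[t]]` with constant term `1` admits a unique factorization
`f = ∏_{m ≥ 1} (1 - tᵐ)^{s(m)}` with integer exponents `s(m)`; the infinite product is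
interpreted coefficientwise: in each degree `n` only the factors with `1 ≤ m ≤ n` contribute. -/
theorem unique_binomial_factorization (f : PowerSeries ℤ)
    (hf : PowerSeries.constantCoeff f = 1) :
    ∃! s : ℕ → ℤ, s 0 = 0 ∧ ∀ n : ℕ,
      PowerSeries.coeff n f =
        PowerSeries.coeff n
          ((∏ m ∈ Finset.Icc 1 n, binomUnit m ^ s m : (PowerSeries ℤ)ˣ) : PowerSeries ℤ) := by
  refine ⟨sAux f, ⟨sAux_zero f, ?_⟩, ?_⟩
  · intro n
    match n with
    | 0 =>
      show _ = PowerSeries.coeff 0 ((partialProd (sAux f) 0 : (PowerSeries ℤ)ˣ) : PowerSeries ℤ)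
      rw [coeff_zero_partialProd, PowerSeries.coeff_zero_eq_constantCoeff, hf]
    | n + 1 =>
      show _ = PowerSeries.coeff (n + 1)
        ((partialProd (sAux f) (n + 1) : (PowerSeries ℤ)ˣ) : PowerSeries ℤ)
      rw [coeff_succ_partialProd, sAux_succ]
      ring
  · rintro s ⟨hs0, hs⟩
    funext n
    induction n using Nat.strong_induction_on with
    | _ n ih =>
      match n with
      | 0 => rw [hs0, sAux_zero]
      | n + 1 =>
        have hP : partialProd s n = partialProd (sAux f) n := by
          unfold partialProd
          refine Finset.prod_congr rfl fun m hm => ?_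
          rw [ih m (by have := (Finset.mem_Icc.mp hm).2; omega)]
        have h1 := hs (n + 1)
        have h2 : PowerSeries.coeff (n + 1) f =
            PowerSeries.coeff (n + 1)
              ((partialProd (sAux f) n : (PowerSeries ℤ)ˣ) : PowerSeries ℤ) - sAux f (n + 1) := by
          rw [sAux_succ]; ring
        rw [show (∏ m ∈ Finset.Icc 1 (n + 1), binomUnit m ^ s m : (PowerSeries ℤ)ˣ) =
            partialProd s (n + 1) from rfl, coeff_succ_partialProd, hP] at h1
        omega
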